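/- Let X = {x_1, x_2, …} be a countably infinite set well-ordered with order type ω (x_1 < x_2 < ⋯), and let 𝔖_(X) be the group of finitary permutations of X (permutations moving only finitely many elements). Then the symmetric cancellation ordering on X^⋄ corresponding to 𝔖_(X) and the lexicographic term ordering ≤_lex is a well-quasi-ordering (that is, ≤_lex is lovely for 𝔖_(X)). -/

import Mathlib

/-- A quasi-ordering (here: any binary relation) `r` on `S` is a well-quasi-ordering if
every infinite sequence is good, i.e. there are `i < j` with `r (f i) (f j)`. -/
def IsWQO {S : Type*} (r : S → S → Prop) : Prop :=
  ∀ f : ℕ → S, ∃ i j : ℕ, i < j ∧ r (f i) (f j)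

/-- A term ordering of the monoid of monomials `X →₀ ℕ`: a linear order which is
well-founded, with `1 ≤ x` for every indeterminate `x`, and compatible with
multiplication by indeterminates. -/
def IsTermOrder {X : Type*} (r : (X →₀ ℕ) → (X →₀ ℕ) → Prop) : Prop :=
  IsLinearOrder (X →₀ ℕ) r ∧
  WellFounded (fun v w : X →₀ ℕ => r v w ∧ v ≠ w) ∧
  (∀ x : X, r 0 (Finsupp.single x 1)) ∧
  (∀ (v w : X →₀ ℕ) (x : X), r v w → r (Finsupp.single x 1 + v) (Finsupp.single x 1 + w))

/-- The symmetric cancellation ordering corresponding to a permutation group `G` on `X`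
and a term ordering `r` of the monomials `X →₀ ℕ`:  `v ⪯ w` iff `r v w` and there are
`σ ∈ G` and a monomial `u` with `w = u·σv` and `u·σv' ≤ w` for every `v' ≤ v`. -/
def SymCancel {X : Type*} (G : Subgroup (Equiv.Perm X))
    (r : (X →₀ ℕ) → (X →₀ ℕ) → Prop) (v w : X →₀ ℕ) : Prop :=
  r v w ∧ ∃ σ : Equiv.Perm X, σ ∈ G ∧ ∃ u : X →₀ ℕ,
    w = u + Finsupp.mapDomain (⇑σ) v ∧
    ∀ v' : X →₀ ℕ, r v' v → r (u + Finsupp.mapDomain (⇑σ) v') w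

/-- The lexicographic ordering of monomials induced by a linear order on `X`:
`v ≤lex w` iff `v = w` or there is `x` with `v x < w x` and `v y = w y` for all `y > x`. -/
def LexLe {X : Type*} [LinearOrder X] (v w : X →₀ ℕ) : Prop :=
  v = w ∨ ∃ x : X, v x < w x ∧ ∀ y : X, x < y → v y = w y

/-- The group of finitary permutations of `X` (those moving only finitely many points). -/
def finitaryPerms (X : Type*) : Subgroup (Equiv.Perm X) where
  carrier := {σ : Equiv.Perm X | {x : X | σ x ≠ x}.Finite}
  one_mem' := by simp
  mul_mem' := by
    intro σ τ hσ hτ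
    refine Set.Finite.subset (Set.Finite.union hσ hτ) ?_
    intro x hx
    by_contra h
    simp only [Set.mem_union, Set.mem_setOf_eq] at h hx
    push_neg at h
    exact hx (by simp [Equiv.Perm.mul_apply, h.1, h.2])
  inv_mem' := by
    intro σ hσ
    refine Set.Finite.subset hσ ?_
    intro x hx
    simp only [Set.mem_setOf_eq] at hx ⊢
    intro h
    exact hx (Equiv.Perm.inv_eq_iff_eq.mpr h.symm)


section Aux

open Finsupp

/-- The "embedding" divisibility relation on monomials: there is a strictly increasing
map of indeterminates under which `v` divides `w`. -/
def EmbLe (v w : ℕ →₀ ℕ) : Prop :=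
  ∃ φ : ℕ → ℕ, StrictMono φ ∧ ∀ i, v i ≤ w (φ i)

lemma swap_mem_finitary {a b : ℕ} : Equiv.swap a b ∈ finitaryPerms ℕ := by
  have hsub : {x : ℕ | Equiv.swap a b x ≠ x} ⊆ {a, b} := by
    intro x hx
    simp only [Set.mem_setOf_eq] at hx
    by_contra h
    simp only [Set.mem_insert_iff, Set.mem_singleton_iff] at h
    push_neg at h
    exact hx (Equiv.swap_apply_of_ne_of_ne h.1 h.2)
  exact Set.Finite.subset ((Set.finite_singleton b).insert a) hsub

/-- Every injection of `ℕ` agrees with some finitary permutation on `{0, …, M}`. -/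
lemma exists_finitary_extend {φ : ℕ → ℕ} (hφ : Function.Injective φ) (M : ℕ) :
    ∃ σ : Equiv.Perm ℕ, σ ∈ finitaryPerms ℕ ∧ ∀ i ≤ M, σ i = φ i := by
  induction M with
  | zero =>
    refine ⟨Equiv.swap 0 (φ 0), swap_mem_finitary, ?_⟩
    intro i hi
    interval_cases i
    simp [Equiv.swap_apply_left]
  | succ M ih =>
    obtain ⟨σ, hσG, hσ⟩ := ih
    refine ⟨Equiv.swap (φ (M + 1)) (σ (M + 1)) * σ,
      (finitaryPerms ℕ).mul_mem swap_mem_finitary hσG, ?_⟩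
    intro i hi
    rcases Nat.lt_or_ge i (M + 1) with h | h
    · have hi' : i ≤ M := by omega
      simp only [Equiv.Perm.mul_apply, hσ i hi']
      apply Equiv.swap_apply_of_ne_of_ne
      · intro hc
        exact absurd (hφ hc) (by omega)
      · intro hc
        have : σ i = σ (M + 1) := (hσ i hi').trans hc
        exact absurd (σ.injective this) (by omega)
    · have hiM : i = M + 1 := by omega
      subst hiM
      simp [Equiv.Perm.mul_apply, Equiv.swap_apply_right]

lemma lexLe_add_left (u a b : ℕ →₀ ℕ) (h : LexLe a b) : LexLe (u + a) (u + b) := by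
  rcases h with rfl | ⟨x, h1, h2⟩
  · exact Or.inl rfl
  · refine Or.inr ⟨x, ?_, fun y hy => ?_⟩
    · simp only [Finsupp.add_apply]; omega
    · simp only [Finsupp.add_apply, h2 y hy]

/-- An embedding of monomials implies the lexicographic inequality. -/
lemma embLe_lexLe {v w : ℕ →₀ ℕ} (h : EmbLe v w) : LexLe v w := by
  classical
  obtain ⟨φ, hm, hle⟩ := h
  by_cases hvw : v = w
  · exact Or.inl hvw
  set D := (v.support ∪ w.support).filter (fun i => v i ≠ w i) with hD
  have hDne : D.Nonempty := by
    by_contra hne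
    apply hvw
    ext i
    by_contra hi
    have hiD : i ∈ D := by
      refine Finset.mem_filter.mpr ⟨Finset.mem_union.mpr ?_, hi⟩
      by_cases h0 : v i = 0
      · exact Or.inr (Finsupp.mem_support_iff.mpr (by omega))
      · exact Or.inl (Finsupp.mem_support_iff.mpr h0)
    exact hne ⟨i, hiD⟩
  set x := D.max' hDne with hx
  have hxd : v x ≠ w x := (Finset.mem_filter.mp (D.max'_mem hDne)).2
  have habove : ∀ y, x < y → v y = w y := by
    intro y hy
    by_contra hne
    have hyD : y ∈ D := by
      refine Finset.mem_filter.mpr ⟨Finset.mem_union.mpr ?_, hne⟩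
      by_cases h0 : v y = 0
      · exact Or.inr (Finsupp.mem_support_iff.mpr (by omega))
      · exact Or.inl (Finsupp.mem_support_iff.mpr h0)
    exact absurd (Finset.le_max' D y hyD) (not_le.mpr hy)
  refine Or.inr ⟨x, ?_, habove⟩
  rcases lt_or_gt_of_ne hxd with h1 | h1
  · exact h1
  exfalso
  -- v x > w x : derive an infinite subset of the support of v
  have hφx : x < φ x := by
    rcases lt_or_eq_of_le (hm.le_apply) with h2 | h2
    · exact h2
    · exfalso
      have := hle x
      rw [← h2] at this
      omega
  have hgt : ∀ m, x < m → m < φ m := by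
    have haux : ∀ m, x + 1 ≤ m → m < φ m := by
      intro m hm'
      induction m, hm' using Nat.le_induction with
      | base =>
        have h5 := hm (Nat.lt_succ_self x)
        rw [Nat.succ_eq_add_one] at h5
        omega
      | succ n hn ihn =>
        have h5 := hm (Nat.lt_succ_self n)
        rw [Nat.succ_eq_add_one] at h5
        omega
    exact fun m hxm => haux m hxm
  have key : ∀ k : ℕ, x < φ^[k] (φ x) ∧ v x ≤ v (φ^[k] (φ x)) := by
    intro k
    induction k with
    | zero =>
      refine ⟨by simpa using hφx, ?_⟩
      have h2 := hle x
      rw [← habove (φ x) hφx] at h2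
      simpa using h2
    | succ k ih =>
      obtain ⟨h1k, h2k⟩ := ih
      have hgt' := hgt _ h1k
      rw [Function.iterate_succ_apply']
      refine ⟨h1k.trans hgt', ?_⟩
      have h3 := hle (φ^[k] (φ x))
      have h4 := habove (φ (φ^[k] (φ x))) (h1k.trans hgt')
      omega
  have hsm : StrictMono (fun k => φ^[k] (φ x)) := by
    apply strictMono_nat_of_lt_succ
    intro k
    simp only [Function.iterate_succ_apply']
    exact hgt _ (key k).1
  have hmem : ∀ k : ℕ, φ^[k] (φ x) ∈ (v.support : Set ℕ) := fun k =>
    Finset.mem_coe.mpr (Finsupp.mem_support_iff.mpr (by have := (key k).2; omega))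
  exact (Set.infinite_of_injective_forall_mem hsm.injective hmem) v.support.finite_toSet

/-- The main lemma: an embedding implies the symmetric cancellation relation. -/
lemma embLe_symCancel {v w : ℕ →₀ ℕ} (h : EmbLe v w) :
    SymCancel (finitaryPerms ℕ) LexLe v w := by
  obtain ⟨φ, hm, hle⟩ := h
  refine ⟨embLe_lexLe ⟨φ, hm, hle⟩, ?_⟩
  set M := v.support.sup id with hM
  have hsupp : ∀ i, M < i → v i = 0 := by
    intro i hi
    by_contra h0
    have : i ≤ M := Finset.le_sup (f := id) (Finsupp.mem_support_iff.mpr h0)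
    omega
  obtain ⟨σ, hσG, hσ⟩ := exists_finitary_extend hm.injective M
  have hmap : ∀ (a : ℕ →₀ ℕ) (n : ℕ), Finsupp.mapDomain (⇑σ) a (σ n) = a n :=
    fun a n => Finsupp.mapDomain_apply σ.injective a n
  have hmap' : ∀ (a : ℕ →₀ ℕ) (n : ℕ), Finsupp.mapDomain (⇑σ) a n = a (σ.symm n) := by
    intro a n
    conv_lhs => rw [← σ.apply_symm_apply n]
    exact hmap a _
  have hdom : ∀ n, Finsupp.mapDomain (⇑σ) v n ≤ w n := by
    intro n
    rw [hmap']
    rcases le_or_gt (σ.symm n) M with hmM | hmM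
    · have hn : σ (σ.symm n) = n := σ.apply_symm_apply n
      calc v (σ.symm n) ≤ w (φ (σ.symm n)) := hle _
        _ = w n := by rw [← hσ _ hmM, hn]
    · rw [hsupp _ hmM]
      exact Nat.zero_le _
  have hwu : w = w - Finsupp.mapDomain (⇑σ) v + Finsupp.mapDomain (⇑σ) v := by
    ext n
    have := hdom n
    simp only [Finsupp.add_apply, Finsupp.tsub_apply]
    omega
  refine ⟨σ, hσG, w - Finsupp.mapDomain (⇑σ) v, hwu, ?_⟩
  intro v' hv'
  have key : LexLe (Finsupp.mapDomain (⇑σ) v') (Finsupp.mapDomain (⇑σ) v) := by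
    rcases hv' with rfl | ⟨x, hx1, hx2⟩
    · exact Or.inl rfl
    · have hxM : x ≤ M := Finset.le_sup (f := id) (Finsupp.mem_support_iff.mpr (by omega))
      refine Or.inr ⟨σ x, ?_, fun y hy => ?_⟩
      · rw [hmap, hmap]; exact hx1
      · rw [hmap', hmap']
        rcases le_or_gt (σ.symm y) x with hz | hz
        · exfalso
          have hzM : σ.symm y ≤ M := le_trans hz hxM
          have h1 : σ (σ.symm y) = y := σ.apply_symm_apply y
          have h2 : φ (σ.symm y) ≤ φ x := hm.monotone hz
          rw [hσ _ hzM] at h1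
          rw [← hσ x hxM] at h2
          omega
        · exact hx2 _ hz
  nth_rewrite 2 [hwu]
  exact lexLe_add_left _ _ _ key

/-- Extracting a strictly increasing index map from `List.SublistForall₂`. -/
lemma sublistForall₂_exists_strictMono {l₁ l₂ : List ℕ}
    (h : List.SublistForall₂ (· ≤ ·) l₁ l₂) :
    ∃ φ : ℕ → ℕ, StrictMono φ ∧
      ∀ i < l₁.length, φ i < l₂.length ∧ l₁.getD i 0 ≤ l₂.getD (φ i) 0 := by
  induction h with
  | nil => exact ⟨id, strictMono_id, by simp⟩
  | @cons a b t₁ t₂ hab _ ih =>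
    obtain ⟨φ, hmono, hφ⟩ := ih
    refine ⟨fun i => match i with | 0 => 0 | (j + 1) => φ j + 1, ?_, ?_⟩
    · apply strictMono_nat_of_lt_succ
      intro n
      match n with
      | 0 => exact Nat.succ_pos _
      | j + 1 => exact Nat.succ_lt_succ (hmono (Nat.lt_succ_self j))
    · intro i hi
      match i with
      | 0 => simpa using hab
      | j + 1 =>
        have hj : j < t₁.length := by simpa using hi
        obtain ⟨h1, h2⟩ := hφ j hj
        exact ⟨by simpa using h1, by simpa using h2⟩
  | @cons_right b t₁ t₂ _ ih =>
    obtain ⟨φ, hmono, hφ⟩ := ih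
    refine ⟨fun i => φ i + 1, fun p q hpq => Nat.succ_lt_succ (hmono hpq), ?_⟩
    intro i hi
    obtain ⟨h1, h2⟩ := hφ i hi
    exact ⟨by simpa using h1, by simpa using h2⟩

/-- The list of exponents of a monomial. -/
def expList (v : ℕ →₀ ℕ) : List ℕ := (List.range (v.support.sup id + 1)).map ⇑v

lemma expList_getD (v : ℕ →₀ ℕ) (i : ℕ) : (expList v).getD i 0 = v i := by
  rcases Nat.lt_or_ge i (v.support.sup id + 1) with h | h
  · have hlen : i < (expList v).length := by simpa [expList] using h
    rw [List.getD_eq_getElem _ _ hlen]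
    simp [expList]
  · have hlen : (expList v).length ≤ i := by simpa [expList] using h
    rw [List.getD_eq_default _ _ hlen]
    by_contra h0
    have : i ≤ v.support.sup id :=
      Finset.le_sup (f := id) (Finsupp.mem_support_iff.mpr fun hc => h0 hc.symm)
    omega

lemma isWQO_embLe : IsWQO EmbLe := by
  intro f
  have huniv : (Set.univ : Set ℕ).PartiallyWellOrderedOn (· ≤ ·) :=
    (Set.isWF_univ_iff.mpr inferInstance).isPWO
  have hH := Set.PartiallyWellOrderedOn.partiallyWellOrderedOn_sublistForall₂ (· ≤ ·) huniv
  obtain ⟨i, j, hij, hsub⟩ := hH.exists_lt (f := fun n => expList (f n)) (fun n => by simp)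
  refine ⟨i, j, hij, ?_⟩
  obtain ⟨φ, hmono, hφ⟩ := sublistForall₂_exists_strictMono hsub
  refine ⟨φ, hmono, fun k => ?_⟩
  rcases Nat.lt_or_ge k (expList (f i)).length with hk | hk
  · obtain ⟨h1, h2⟩ := hφ k hk
    rw [← expList_getD (f i) k, ← expList_getD (f j) (φ k)]
    exact h2
  · rw [← expList_getD (f i) k, List.getD_eq_default _ _ hk]
    exact Nat.zero_le _

end Aux

/-- For `X = {x_1 < x_2 < ⋯}` countably infinite of order type `ω`
(modelled by `ℕ` with its usual order), the symmetric cancellation ordering corresponding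
to the group `𝔖_(X)` of finitary permutations and the lexicographic term ordering is a
well-quasi-ordering (i.e. `≤lex` is lovely for `𝔖_(X)`). -/
theorem stmt3 : IsWQO (SymCancel (finitaryPerms ℕ) (LexLe (X := ℕ))) := by
  intro f
  obtain ⟨i, j, hij, h⟩ := isWQO_embLe f
  exact ⟨i, j, hij, embLe_symCancel h⟩
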